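/- Let D : ℝ × ℝ → ℝ be twice continuously differentiable with ∂₂∂₁D(r,b) < 0 for all (r,b), and suppose that for every r the map b ↦ ∂₁D(r,b) is surjective onto ℝ. Let k : ℝ → ℝ be continuously differentiable. Then there is a unique function b* : ℝ → ℝ satisfying ∂₁D(r, b*(r)) = k(r) for all r; b* is differentiable with (b*)'(r) = (∂₁∂₁D(r,b*(r)) − k'(r)) / (−∂₂∂₁D(r,b*(r))) for every r; in particular, if ∂₁∂₁D(r,b*(r)) − k'(r) > 0 for all r, then (b*)'(r) > 0 for all r. -/

import Mathlib

/-- Mean value theorem, two-sided form with a distance bound on the witness. -/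
lemma mvt_abs (g g' : ℝ → ℝ) (hg : ∀ x, HasDerivAt g (g' x) x) (a b : ℝ) :
    ∃ c, |c - a| ≤ |b - a| ∧ g b - g a = g' c * (b - a) := by
  rcases lt_trichotomy a b with hab | hab | hab
  · obtain ⟨c, hc, hc'⟩ := exists_hasDerivAt_eq_slope g g' hab
      (fun x _ => (hg x).continuousAt.continuousWithinAt) (fun x _ => hg x)
    refine ⟨c, ?_, ?_⟩
    · rw [abs_of_pos (sub_pos.2 hc.1), abs_of_pos (sub_pos.2 hab)]
      linarith [hc.2]
    · rw [eq_div_iff (sub_ne_zero.2 hab.ne')] at hc'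
      linarith [hc']
  · exact ⟨a, by simp [hab], by simp [hab]⟩
  · obtain ⟨c, hc, hc'⟩ := exists_hasDerivAt_eq_slope g g' hab
      (fun x _ => (hg x).continuousAt.continuousWithinAt) (fun x _ => hg x)
    refine ⟨c, ?_, ?_⟩
    · rw [abs_of_neg (sub_neg.2 hc.2), abs_of_neg (sub_neg.2 hab)]
      linarith [hc.1]
    · rw [eq_div_iff (sub_ne_zero.2 hab.ne')] at hc'
      nlinarith [hc']

/-- The inverse-anchor map of Theorem 3.2: under single crossing
`∂₂∂₁D < 0` and surjectivity of `b ↦ ∂₁D(r,b)`, there is a unique map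
`b*` solving the sender first-order condition `∂₁D(r, b*(r)) = k(r)`;
it is differentiable with the stated derivative, which is positive whenever
the sender's strict second-order condition `∂₁∂₁D − k' > 0` holds. -/
theorem inverse_anchor_map
    (D D₁ D₁₁ D₁₂ : ℝ → ℝ → ℝ) (k k' : ℝ → ℝ)
    (hD₁ : ∀ r b, HasDerivAt (fun r' => D r' b) (D₁ r b) r)
    (hD₁₁ : ∀ r b, HasDerivAt (fun r' => D₁ r' b) (D₁₁ r b) r)
    (hD₁₂ : ∀ r b, HasDerivAt (fun b' => D₁ r b') (D₁₂ r b) b)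
    (hD₁cont : Continuous fun p : ℝ × ℝ => D₁ p.1 p.2)
    (hD₁₁cont : Continuous fun p : ℝ × ℝ => D₁₁ p.1 p.2)
    (hD₁₂cont : Continuous fun p : ℝ × ℝ => D₁₂ p.1 p.2)
    (hsc : ∀ r b, D₁₂ r b < 0)
    (hsurj : ∀ r, Function.Surjective fun b => D₁ r b)
    (hk : ∀ r, HasDerivAt k (k' r) r)
    (hk'cont : Continuous k') :
    ∃ bs : ℝ → ℝ,
      (∀ r, D₁ r (bs r) = k r) ∧
      (∀ bs' : ℝ → ℝ, (∀ r, D₁ r (bs' r) = k r) → bs' = bs) ∧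
      (∀ r, HasDerivAt bs
        ((D₁₁ r (bs r) - k' r) / (-(D₁₂ r (bs r)))) r) ∧
      ((∀ r, 0 < D₁₁ r (bs r) - k' r) →
        ∀ r, 0 < (D₁₁ r (bs r) - k' r) / (-(D₁₂ r (bs r)))) := by
  -- strict antitonicity in the anchor
  have hanti : ∀ r, StrictAnti (fun b => D₁ r b) := fun r =>
    strictAnti_of_hasDerivAt_neg (hD₁₂ r) (hsc r)
  -- define bs by choice
  choose bs hbs0 using fun r => hsurj r (k r)
  have hbs : ∀ r, D₁ r (bs r) = k r := hbs0
  -- uniqueness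
  have huniq : ∀ bs' : ℝ → ℝ, (∀ r, D₁ r (bs' r) = k r) → bs' = bs := by
    intro bs' h
    funext r
    exact (hanti r).injective ((h r).trans (hbs r).symm)
  -- continuity of bs
  have hcont : ∀ r₀, Filter.Tendsto bs (nhds r₀) (nhds (bs r₀)) := by
    intro r₀
    rw [tendsto_order]
    constructor
    · intro a ha
      -- a < bs r₀, i.e. k r₀ = D₁ r₀ (bs r₀) < D₁ r₀ a
      have h0 : k r₀ < D₁ r₀ a := (hbs r₀) ▸ (hanti r₀) ha
      have hc : Filter.Tendsto (fun r => D₁ r a - k r) (nhds r₀)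
          (nhds (D₁ r₀ a - k r₀)) :=
        ((hD₁cont.comp (continuous_id.prodMk continuous_const)).tendsto r₀).sub
          ((hk r₀).continuousAt)
      have := hc.eventually_const_lt (show (0:ℝ) < D₁ r₀ a - k r₀ by linarith)
      filter_upwards [this] with r hr
      have : D₁ r (bs r) < D₁ r a := by rw [hbs r]; linarith
      exact (hanti r).lt_iff_gt.mp this
    · intro a ha
      have h0 : D₁ r₀ a < k r₀ := (hbs r₀) ▸ (hanti r₀) ha
      have hc : Filter.Tendsto (fun r => k r - D₁ r a) (nhds r₀)
          (nhds (k r₀ - D₁ r₀ a)) :=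
        ((hk r₀).continuousAt).sub
          ((hD₁cont.comp (continuous_id.prodMk continuous_const)).tendsto r₀)
      have := hc.eventually_const_lt (show (0:ℝ) < k r₀ - D₁ r₀ a by linarith)
      filter_upwards [this] with r hr
      have : D₁ r a < D₁ r (bs r) := by rw [hbs r]; linarith
      exact (hanti r).lt_iff_gt.mp this
  -- differentiability
  have hderiv : ∀ r, HasDerivAt bs
      ((D₁₁ r (bs r) - k' r) / (-(D₁₂ r (bs r)))) r := by
    intro r₀
    set b₀ := bs r₀ with hb₀
    -- mean value witnesses
    choose ξ hξd hξe using fun r => mvt_abs (fun b => D₁ r b) (fun b => D₁₂ r b)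
      (hD₁₂ r) b₀ (bs r)
    choose η hηd hηe using fun r => mvt_abs (fun r' => D₁ r' b₀)
      (fun r' => D₁₁ r' b₀) (fun x => hD₁₁ x b₀) r₀ r
    choose ζ hζd hζe using mvt_abs k k' hk r₀
    rw [hasDerivAt_iff_tendsto_slope]
    -- the candidate slope expression
    have key : ∀ r, r ≠ r₀ → slope bs r₀ r =
        (k' (ζ r) - D₁₁ (η r) b₀) / (D₁₂ r (ξ r)) := by
      intro r hr
      have hrne : r - r₀ ≠ 0 := sub_ne_zero.2 hr
      have hdne : D₁₂ r (ξ r) ≠ 0 := (hsc r (ξ r)).ne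
      have e1 := hξe r   -- D₁ r (bs r) - D₁ r b₀ = D₁₂ r (ξ r) * (bs r - b₀)
      have e2 := hηe r   -- D₁ r b₀ - D₁ r₀ b₀ = D₁₁ (η r) b₀ * (r - r₀)
      have e3 := hζe r   -- k r - k r₀ = k' (ζ r) * (r - r₀)
      rw [hbs r] at e1
      rw [hb₀, hbs r₀, ← hb₀] at e2
      rw [slope_def_field, div_eq_div_iff hrne hdne, ← hb₀]
      have h4 : k r - k r₀ =
          D₁₂ r (ξ r) * (bs r - b₀) + D₁₁ (η r) b₀ * (r - r₀) := by
        linarith [e1, e2]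
      linear_combination e3 - h4
    -- limits of the witnesses
    have hξlim : Filter.Tendsto ξ (nhds r₀) (nhds b₀) := by
      rw [tendsto_iff_dist_tendsto_zero]
      refine squeeze_zero (g := fun r => dist (bs r) b₀) (fun r => dist_nonneg)
        (fun r => ?_) ?_
      · simpa [Real.dist_eq] using hξd r
      · have : Filter.Tendsto (fun r => dist (bs r) b₀) (nhds r₀) (nhds 0) := by
          simpa using (tendsto_iff_dist_tendsto_zero.mp (hcont r₀))
        simpa [Real.dist_eq] using this
    have hηlim : Filter.Tendsto η (nhds r₀) (nhds r₀) := by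
      rw [tendsto_iff_dist_tendsto_zero]
      refine squeeze_zero (g := fun r => dist r r₀) (fun r => dist_nonneg)
        (fun r => ?_) ?_
      · simpa [Real.dist_eq] using hηd r
      · simpa [Real.dist_eq] using
          (tendsto_iff_dist_tendsto_zero.mp (Filter.tendsto_id (x := nhds r₀)))
    have hζlim : Filter.Tendsto ζ (nhds r₀) (nhds r₀) := by
      rw [tendsto_iff_dist_tendsto_zero]
      refine squeeze_zero (g := fun r => dist r r₀) (fun r => dist_nonneg)
        (fun r => ?_) ?_
      · simpa [Real.dist_eq] using hζd r
      · simpa [Real.dist_eq] using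
          (tendsto_iff_dist_tendsto_zero.mp (Filter.tendsto_id (x := nhds r₀)))
    have hlim : Filter.Tendsto
        (fun r => (k' (ζ r) - D₁₁ (η r) b₀) / (D₁₂ r (ξ r))) (nhds r₀)
        (nhds ((k' r₀ - D₁₁ r₀ b₀) / (D₁₂ r₀ b₀))) := by
      refine Filter.Tendsto.div ?_ ?_ (hsc r₀ b₀).ne
      · exact ((hk'cont.tendsto r₀).comp hζlim).sub
          ((hD₁₁cont.tendsto (r₀, b₀)).comp (hηlim.prodMk_nhds tendsto_const_nhds))
      · exact (hD₁₂cont.tendsto (r₀, b₀)).comp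
          ((Filter.tendsto_id (x := nhds r₀)).prodMk_nhds hξlim)
    have hval : (k' r₀ - D₁₁ r₀ b₀) / (D₁₂ r₀ b₀) =
        (D₁₁ r₀ b₀ - k' r₀) / (-(D₁₂ r₀ b₀)) := by
      rw [div_neg, ← neg_div, neg_sub]
    rw [← hval]
    refine Filter.Tendsto.congr' ?_ (hlim.mono_left nhdsWithin_le_nhds)
    filter_upwards [self_mem_nhdsWithin] with r hr
    exact (key r hr).symm
  refine ⟨bs, hbs, huniq, hderiv, ?_⟩
  intro hpos r
  exact div_pos (hpos r) (by linarith [hsc r (bs r)])
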